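/- Let 0 ≤ λ₀ < λ₁ ≤ 1. Suppose that for every ε > 0 there exists an integer n₀ = n₀(ε) such that for every n ≥ n₀ and every pair of symmetric convex sets A, B ⊆ ℝ^n, ψ_{λ₁}(I_A, I_B) ≥ exp{−εn}·ψ_{λ₀}(I_A, I_B). Then for every n ≥ 1 and every pair of symmetric convex sets A, B ⊆ ℝ^n, ψ_{λ₁}(I_A, I_B) ≥ ψ_{λ₀}(I_A, I_B). In particular, if this hypothesis holds with λ₀ = 0 and λ₁ = 1, then μ_n(A ∩ B) ≥ μ_n(A)·μ_n(B) for all symmetric convex A, B ⊆ ℝ^n and all n ≥ 1. -/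

import Mathlib

open MeasureTheory Real

/-- The standard Gaussian measure on ℝⁿ. -/
noncomputable def stdGaussian (n : ℕ) : Measure (EuclideanSpace ℝ (Fin n)) :=
  volume.withDensity fun x =>
    ENNReal.ofReal ((2 * π) ^ (-(n : ℝ) / 2) * Real.exp (-‖x‖ ^ 2 / 2))

/-- The density `f_{2n}(x, y; λ)` of the correlated pair of standard Gaussians. -/
noncomputable def gaussPairDensity (n : ℕ) (l : ℝ)
    (x y : EuclideanSpace ℝ (Fin n)) : ℝ :=
  (2 * π) ^ (-(n : ℝ)) * (1 - l ^ 2) ^ (-(n : ℝ) / 2) *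
    Real.exp (-(‖x‖ ^ 2 + ‖y‖ ^ 2 - 2 * l * (inner ℝ x y : ℝ)) / (2 * (1 - l ^ 2)))

/-- `ψ_λ(u, v)` for `λ ∈ [0, 1)` is `∫∫ u(x) v(y) f_{2n}(x, y; λ) dx dy`, and
`ψ_1(u, v) = ∫ u v dμₙ`. -/
noncomputable def psi (n : ℕ) (u v : EuclideanSpace ℝ (Fin n) → ℝ) (l : ℝ) : ℝ :=
  if l = 1 then ∫ x, u x * v x ∂(stdGaussian n)
  else ∫ x, ∫ y, u x * v y * gaussPairDensity n l x y

namespace GCIAux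

open scoped ENNReal NNReal

/-- The Gaussian density on ℝᵏ. -/
noncomputable def gd (k : ℕ) (x : EuclideanSpace ℝ (Fin k)) : ℝ :=
  (2 * π) ^ (-(k : ℝ) / 2) * Real.exp (-‖x‖ ^ 2 / 2)

lemma gd_nonneg (k : ℕ) (x : EuclideanSpace ℝ (Fin k)) : 0 ≤ gd k x := by
  unfold gd; positivity

lemma gd_continuous (k : ℕ) : Continuous (gd k) := by
  unfold gd
  exact continuous_const.mul (Real.continuous_exp.comp
    (((continuous_norm.pow 2).neg).div_const 2))

lemma stdGaussian_eq_withDensity (k : ℕ) :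
    stdGaussian k = volume.withDensity fun x => ((Real.toNNReal (gd k x) : ℝ≥0) : ℝ≥0∞) :=
  rfl

lemma integrable_gd (k : ℕ) : Integrable (gd k) := by
  have h := (GaussianFourier.integrable_cexp_neg_mul_sq_norm_add
    (V := EuclideanSpace ℝ (Fin k)) (b := (1 : ℂ)/2) (by norm_num) 0 0).norm
  have h2 : Integrable (fun v : EuclideanSpace ℝ (Fin k) => Real.exp (-‖v‖ ^ 2 / 2)) := by
    apply h.congr
    filter_upwards with v
    rw [show (-((1:ℂ)/2) * (‖v‖:ℂ) ^ 2 + 0 * ((inner ℝ (0 : EuclideanSpace ℝ (Fin k)) v : ℝ) : ℂ))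
        = ((-‖v‖ ^ 2 / 2 : ℝ) : ℂ) by push_cast; ring]
    rw [Complex.norm_exp_ofReal]
  exact h2.const_mul _

/-- `stdGaussian` of a measurable set as `ofReal` of an integral. -/
lemma stdGaussian_apply (k : ℕ) {C : Set (EuclideanSpace ℝ (Fin k))} (hC : MeasurableSet C) :
    stdGaussian k C = ENNReal.ofReal (∫ x in C, gd k x) := by
  rw [show stdGaussian k = volume.withDensity fun x => ENNReal.ofReal (gd k x) from rfl,
    withDensity_apply _ hC]
  rw [← ofReal_integral_eq_lintegral_ofReal ((integrable_gd k).restrict)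
    (Filter.Eventually.of_forall fun x => gd_nonneg k x)]

/-- `ψ₁` as an integral against the Gaussian density. -/
lemma psi_one_eq (k : ℕ) (u v : EuclideanSpace ℝ (Fin k) → ℝ) :
    psi k u v 1 = ∫ x, u x * v x * gd k x := by
  rw [psi, if_pos rfl, stdGaussian_eq_withDensity k,
    integral_withDensity_eq_integral_smul
      ((gd_continuous k).measurable.real_toNNReal) (fun x => u x * v x)]
  congr 1 with x
  rw [NNReal.smul_def, Real.coe_toNNReal _ (gd_nonneg k x), smul_eq_mul]
  ring

section Assembly

/-- curry as a measurable equiv -/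
def curryME (m n : ℕ) : (Fin m × Fin n → ℝ) ≃ᵐ (Fin m → Fin n → ℝ) where
  toEquiv := Equiv.curry _ _ _
  measurable_toFun := by
    apply measurable_pi_iff.2 (fun i => measurable_pi_iff.2 (fun j => ?_))
    exact measurable_pi_apply (i, j)
  measurable_invFun := by
    apply measurable_pi_iff.2 (fun p => ?_)
    exact (measurable_pi_apply p.2).comp (measurable_pi_apply p.1)

theorem curryME_mp (m n : ℕ) : MeasurePreserving (curryME m n).symm volume volume := by
  constructor
  · exact (curryME m n).symm.measurable
  · refine (Measure.pi_eq fun s hs => ?_).symm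
    have : (curryME m n).symm ⁻¹' Set.univ.pi s
        = Set.univ.pi (fun i => Set.univ.pi (fun j => s (i, j))) := by
      ext f
      simp [curryME, Equiv.curry, Set.mem_pi, Prod.forall, Function.uncurry]
    rw [MeasurableEquiv.map_apply, this]
    rw [show (volume : Measure (Fin m → Fin n → ℝ)) = Measure.pi (fun _ => volume) from rfl,
      Measure.pi_pi]
    simp_rw [show (volume : Measure (Fin n → ℝ)) = Measure.pi (fun _ => volume) from rfl,
      Measure.pi_pi]
    rw [Fintype.prod_prod_type]

/-- the assembly map from an m-tuple of vectors in ℝⁿ to a vector in ℝ^{mn} -/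
noncomputable def asmME (m n : ℕ) :
    (Fin m → EuclideanSpace ℝ (Fin n)) ≃ᵐ EuclideanSpace ℝ (Fin (m * n)) :=
  (MeasurableEquiv.piCongrRight fun _ => (MeasurableEquiv.toLp 2 (Fin n → ℝ)).symm).trans <|
    ((curryME m n).symm).trans <|
      (MeasurableEquiv.piCongrLeft (fun _ => ℝ) finProdFinEquiv).trans
        (MeasurableEquiv.toLp 2 (Fin (m * n) → ℝ)).symm.symm

theorem asmME_mp (m n : ℕ) : MeasurePreserving (asmME m n) volume volume := by
  have h1 : MeasurePreserving
      (MeasurableEquiv.piCongrRight fun _ : Fin m => (MeasurableEquiv.toLp 2 (Fin n → ℝ)).symm)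
      volume volume :=
    volume_preserving_pi (fun _ => EuclideanSpace.volume_preserving_symm_measurableEquiv_toLp (Fin n))
  have h3 := volume_measurePreserving_piCongrLeft (fun _ => ℝ) (finProdFinEquiv (m := m) (n := n))
  have h4 := (EuclideanSpace.volume_preserving_symm_measurableEquiv_toLp (Fin (m * n))).symm
  exact ((h4.comp h3).comp (curryME_mp m n)).comp h1

theorem asmME_apply (m n : ℕ) (p : Fin m → EuclideanSpace ℝ (Fin n)) (k : Fin (m * n)) :
    asmME m n p k = p (finProdFinEquiv.symm k).1 (finProdFinEquiv.symm k).2 := by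
  show (MeasurableEquiv.piCongrLeft (fun _ => ℝ) finProdFinEquiv)
      (fun pr => p pr.1 pr.2) k = _
  conv_lhs => rw [show k = finProdFinEquiv (finProdFinEquiv.symm k) from
    (finProdFinEquiv.apply_symm_apply k).symm]
  rw [MeasurableEquiv.coe_piCongrLeft, Equiv.piCongrLeft_apply_apply]

/-- sum over assembled coordinates -/
lemma sum_asm {m n : ℕ} (F : Fin m → Fin n → ℝ) :
    ∑ k : Fin (m * n), F (finProdFinEquiv.symm k).1 (finProdFinEquiv.symm k).2
      = ∑ i, ∑ j, F i j := by
  rw [Equiv.sum_comp finProdFinEquiv.symm (fun pr : Fin m × Fin n => F pr.1 pr.2),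
    Fintype.sum_prod_type]

lemma norm_sq_asm {m n : ℕ} (p : Fin m → EuclideanSpace ℝ (Fin n)) :
    ‖asmME m n p‖ ^ 2 = ∑ i, ‖p i‖ ^ 2 := by
  have hsq : ∀ i, ‖p i‖ ^ 2 = ∑ j, p i j ^ 2 := by
    intro i
    rw [EuclideanSpace.norm_eq,
      Real.sq_sqrt (Finset.sum_nonneg fun _ _ => by positivity)]
    simp [Real.norm_eq_abs, sq_abs]
  rw [EuclideanSpace.norm_eq,
    Real.sq_sqrt (Finset.sum_nonneg fun _ _ => by positivity)]
  simp_rw [hsq, Real.norm_eq_abs, sq_abs, asmME_apply]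
  exact sum_asm fun i j => p i j ^ 2

lemma inner_asm {m n : ℕ} (p q : Fin m → EuclideanSpace ℝ (Fin n)) :
    (inner ℝ (asmME m n p) (asmME m n q) : ℝ) = ∑ i, (inner ℝ (p i) (q i) : ℝ) := by
  simp_rw [PiLp.inner_apply, RCLike.inner_apply, conj_trivial, asmME_apply]
  exact sum_asm (fun i j => q i j * p i j)

/-- the i-th block of a vector in ℝ^{mn} -/
noncomputable def blk {m n : ℕ} (x : EuclideanSpace ℝ (Fin (m * n))) (i : Fin m) :
    EuclideanSpace ℝ (Fin n) :=
  WithLp.toLp 2 (fun j => x (finProdFinEquiv (i, j)))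

/-- the m-fold product of a set, viewed inside ℝ^{mn} -/
def prodSet {n : ℕ} (m : ℕ) (A : Set (EuclideanSpace ℝ (Fin n))) :
    Set (EuclideanSpace ℝ (Fin (m * n))) :=
  {x | ∀ i : Fin m, blk x i ∈ A}

lemma blk_asm {m n : ℕ} (p : Fin m → EuclideanSpace ℝ (Fin n)) (i : Fin m) :
    blk (asmME m n p) i = p i := by
  ext j
  show asmME m n p (finProdFinEquiv (i, j)) = p i j
  rw [asmME_apply, Equiv.symm_apply_apply]

lemma asm_mem_prodSet {m n : ℕ} (A : Set (EuclideanSpace ℝ (Fin n)))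
    (p : Fin m → EuclideanSpace ℝ (Fin n)) :
    asmME m n p ∈ prodSet m A ↔ ∀ i, p i ∈ A := by
  unfold prodSet
  simp_rw [Set.mem_setOf_eq, blk_asm]

lemma blk_add_smul {m n : ℕ} (a b : ℝ) (x y : EuclideanSpace ℝ (Fin (m * n))) (i : Fin m) :
    blk (a • x + b • y) i = a • blk x i + b • blk y i := by
  ext j
  show (a • x + b • y) (finProdFinEquiv (i, j)) = _
  simp [blk, PiLp.add_apply, PiLp.smul_apply, smul_eq_mul]

lemma blk_neg {m n : ℕ} (x : EuclideanSpace ℝ (Fin (m * n))) (i : Fin m) :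
    blk (-x) i = -(blk x i) := by
  ext j
  show (-x) (finProdFinEquiv (i, j)) = _
  simp [blk, PiLp.neg_apply]

lemma prodSet_convex {m n : ℕ} {A : Set (EuclideanSpace ℝ (Fin n))} (hA : Convex ℝ A) :
    Convex ℝ (prodSet m A) := by
  intro x hx y hy a b ha hb hab
  intro i
  rw [blk_add_smul]
  exact hA (hx i) (hy i) ha hb hab

lemma prodSet_symm {m n : ℕ} {A : Set (EuclideanSpace ℝ (Fin n))}
    (hA : ∀ x, x ∈ A ↔ -x ∈ A) :
    ∀ x, x ∈ prodSet m A ↔ -x ∈ prodSet m A := by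
  intro x
  constructor
  · intro hx i; rw [blk_neg]; exact (hA _).1 (hx i)
  · intro hx i
    have := hx i
    rw [blk_neg] at this
    exact (hA _).2 this

lemma indicator_prodSet {m n : ℕ} (A : Set (EuclideanSpace ℝ (Fin n)))
    (p : Fin m → EuclideanSpace ℝ (Fin n)) :
    (prodSet m A).indicator (1 : EuclideanSpace ℝ (Fin (m * n)) → ℝ) (asmME m n p)
      = ∏ i, A.indicator (1 : EuclideanSpace ℝ (Fin n) → ℝ) (p i) := by
  classical
  by_cases h : ∀ i, p i ∈ A
  · rw [Set.indicator_of_mem ((asm_mem_prodSet A p).2 h), Pi.one_apply]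
    rw [Finset.prod_congr rfl fun i _ => by
      rw [Set.indicator_of_mem (h i), Pi.one_apply]]
    rw [Finset.prod_const_one]
  · push_neg at h
    obtain ⟨i, hi⟩ := h
    rw [Set.indicator_of_notMem (fun hmem => hi ((asm_mem_prodSet A p).1 hmem i))]
    rw [Finset.prod_eq_zero (Finset.mem_univ i) (Set.indicator_of_notMem hi _)]

/-- the correlated Gaussian density factorizes over blocks -/
lemma gaussPairDensity_asm {m n : ℕ} {l : ℝ} (hl0 : 0 ≤ l) (hl1 : l < 1)
    (p q : Fin m → EuclideanSpace ℝ (Fin n)) :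
    gaussPairDensity (m * n) l (asmME m n p) (asmME m n q)
      = ∏ i, gaussPairDensity n l (p i) (q i) := by
  have h2π : (0 : ℝ) ≤ 2 * π := by positivity
  have hll : (0 : ℝ) ≤ 1 - l ^ 2 := by nlinarith
  unfold gaussPairDensity
  rw [Finset.prod_mul_distrib, Finset.prod_mul_distrib, ← Real.exp_sum,
    Finset.prod_const, Finset.prod_const, Finset.card_univ, Fintype.card_fin]
  rw [← Real.rpow_natCast ((2 * π) ^ (-(n : ℝ))) m, ← Real.rpow_mul h2π,
    ← Real.rpow_natCast ((1 - l ^ 2) ^ (-(n : ℝ) / 2)) m, ← Real.rpow_mul hll]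
  rw [norm_sq_asm, norm_sq_asm, inner_asm]
  have e1 : -((m * n : ℕ) : ℝ) = -(n : ℝ) * m := by push_cast; ring
  have e2 : -((m * n : ℕ) : ℝ) / 2 = -(n : ℝ) / 2 * m := by push_cast; ring
  rw [e2, e1]
  congr 1
  rw [← Finset.sum_div, Finset.sum_neg_distrib, Finset.sum_sub_distrib,
    Finset.sum_add_distrib, ← Finset.mul_sum]

/-- the Gaussian density factorizes over blocks -/
lemma gd_asm {m n : ℕ} (p : Fin m → EuclideanSpace ℝ (Fin n)) :
    gd (m * n) (asmME m n p) = ∏ i, gd n (p i) := by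
  have h2π : (0 : ℝ) ≤ 2 * π := by positivity
  unfold gd
  rw [Finset.prod_mul_distrib, ← Real.exp_sum, Finset.prod_const, Finset.card_univ,
    Fintype.card_fin, ← Real.rpow_natCast ((2 * π) ^ (-(n : ℝ) / 2)) m, ← Real.rpow_mul h2π,
    norm_sq_asm]
  have e2 : -((m * n : ℕ) : ℝ) / 2 = -(n : ℝ) / 2 * m := by push_cast; ring
  rw [e2]
  congr 1
  rw [← Finset.sum_div, Finset.sum_neg_distrib]

end Assembly

section Tensor

variable {n : ℕ} (A B : Set (EuclideanSpace ℝ (Fin n)))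

/-- Tensorization for `λ = 1`. -/
lemma psi_one_pow (m : ℕ) :
    psi (m * n) ((prodSet m A).indicator 1) ((prodSet m B).indicator 1) 1
      = psi n (A.indicator 1) (B.indicator 1) 1 ^ m := by
  rw [psi_one_eq, psi_one_eq]
  rw [← (asmME_mp m n).integral_comp' (g := fun x =>
    (prodSet m A).indicator 1 x * (prodSet m B).indicator 1 x * gd (m * n) x)]
  have : ∀ p : Fin m → EuclideanSpace ℝ (Fin n),
      (prodSet m A).indicator 1 (asmME m n p) * (prodSet m B).indicator 1 (asmME m n p)
        * gd (m * n) (asmME m n p)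
      = ∏ i, (A.indicator 1 (p i) * B.indicator 1 (p i) * gd n (p i)) := by
    intro p
    rw [indicator_prodSet, indicator_prodSet, gd_asm, Finset.prod_mul_distrib,
      Finset.prod_mul_distrib]
  simp_rw [this]
  have := MeasureTheory.integral_fintype_prod_eq_pow (ι := Fin m)
    (f := fun x => A.indicator 1 x * B.indicator 1 x * gd n x) (μ := volume)
  rw [Fintype.card_fin] at this
  exact this

/-- Tensorization for `0 ≤ λ < 1`. -/
lemma psi_lt_pow (m : ℕ) {l : ℝ} (hl0 : 0 ≤ l) (hl1 : l < 1) :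
    psi (m * n) ((prodSet m A).indicator 1) ((prodSet m B).indicator 1) l
      = psi n (A.indicator 1) (B.indicator 1) l ^ m := by
  rw [psi, if_neg (ne_of_lt hl1), psi, if_neg (ne_of_lt hl1)]
  rw [← (asmME_mp m n).integral_comp' (g := fun x =>
    ∫ y, (prodSet m A).indicator 1 x * (prodSet m B).indicator 1 y * gaussPairDensity (m*n) l x y)]
  have step1 : ∀ p : Fin m → EuclideanSpace ℝ (Fin n),
      (∫ y, (prodSet m A).indicator 1 (asmME m n p) * (prodSet m B).indicator 1 y
          * gaussPairDensity (m*n) l (asmME m n p) y)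
      = ∏ i, ∫ b, A.indicator 1 (p i) * B.indicator 1 b * gaussPairDensity n l (p i) b := by
    intro p
    rw [← (asmME_mp m n).integral_comp' (g := fun y =>
      (prodSet m A).indicator 1 (asmME m n p) * (prodSet m B).indicator 1 y
        * gaussPairDensity (m*n) l (asmME m n p) y)]
    have : ∀ q : Fin m → EuclideanSpace ℝ (Fin n),
        (prodSet m A).indicator 1 (asmME m n p) * (prodSet m B).indicator 1 (asmME m n q)
          * gaussPairDensity (m*n) l (asmME m n p) (asmME m n q)
        = ∏ i, (A.indicator 1 (p i) * B.indicator 1 (q i)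
            * gaussPairDensity n l (p i) (q i)) := by
      intro q
      rw [indicator_prodSet, indicator_prodSet, gaussPairDensity_asm hl0 hl1,
        Finset.prod_mul_distrib, Finset.prod_mul_distrib]
    simp_rw [this]
    exact MeasureTheory.integral_fintype_prod_eq_prod (ι := Fin m)
      (f := fun i b => A.indicator 1 (p i) * B.indicator 1 b * gaussPairDensity n l (p i) b)
  simp_rw [step1]
  have := MeasureTheory.integral_fintype_prod_eq_pow (ι := Fin m)
    (f := fun a => ∫ b, A.indicator 1 a * B.indicator 1 b * gaussPairDensity n l a b)
    (μ := volume)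
  rw [Fintype.card_fin] at this
  exact this

/-- nonnegativity of ψ on indicators. -/
lemma psi_nonneg {l : ℝ} (hl0 : 0 ≤ l) (hl1 : l ≤ 1) :
    0 ≤ psi n (A.indicator 1) (B.indicator 1) l := by
  rcases eq_or_lt_of_le hl1 with h1 | h1
  · rw [h1, psi_one_eq]
    apply integral_nonneg
    intro x
    have := Set.indicator_nonneg (fun a _ => (zero_le_one : (0:ℝ) ≤ 1)) (s := A) x
    have := Set.indicator_nonneg (fun a _ => (zero_le_one : (0:ℝ) ≤ 1)) (s := B) x
    have := gd_nonneg n x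
    positivity
  · rw [psi, if_neg (ne_of_lt h1)]
    apply integral_nonneg
    intro x
    apply integral_nonneg
    intro y
    have hA := Set.indicator_nonneg (fun a _ => (zero_le_one : (0:ℝ) ≤ 1)) (s := A) x
    have hB := Set.indicator_nonneg (fun a _ => (zero_le_one : (0:ℝ) ≤ 1)) (s := B) y
    have hd : 0 ≤ gaussPairDensity n l x y := by
      unfold gaussPairDensity
      have h2π : (0:ℝ) < 2 * π := by positivity
      have hll : (0:ℝ) < 1 - l ^ 2 := by nlinarith
      positivity
    positivity

end Tensor

section PartTwo

variable {n : ℕ}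

lemma indicator_mul_gd {A : Set (EuclideanSpace ℝ (Fin n))} (f : EuclideanSpace ℝ (Fin n) → ℝ)
    (x : EuclideanSpace ℝ (Fin n)) :
    A.indicator (1 : EuclideanSpace ℝ (Fin n) → ℝ) x * f x = A.indicator f x := by
  by_cases hx : x ∈ A <;> simp [hx]

/-- `ψ₀` for measurable sets. -/
lemma psi_zero_meas {A B : Set (EuclideanSpace ℝ (Fin n))}
    (hA : MeasurableSet A) (hB : MeasurableSet B) :
    psi n (A.indicator 1) (B.indicator 1) 0
      = (∫ x in A, gd n x) * (∫ x in B, gd n x) := by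
  rw [psi, if_neg (by norm_num)]
  have hd : ∀ x y : EuclideanSpace ℝ (Fin n),
      gaussPairDensity n 0 x y = gd n x * gd n y := by
    intro x y
    unfold gaussPairDensity gd
    have h2π : (0:ℝ) < 2 * π := by positivity
    have hc : ((2:ℝ) * π) ^ (-(n : ℝ)) * ((1:ℝ) - 0 ^ 2) ^ (-(n : ℝ) / 2)
        = (2 * π) ^ (-(n : ℝ) / 2) * (2 * π) ^ (-(n : ℝ) / 2) := by
      rw [← Real.rpow_add h2π]
      norm_num [Real.one_rpow]
    have hE : -(‖x‖ ^ 2 + ‖y‖ ^ 2 - 2 * 0 * (inner ℝ x y : ℝ)) / (2 * (1 - 0 ^ 2))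
        = -‖x‖ ^ 2 / 2 + -‖y‖ ^ 2 / 2 := by
      norm_num
      ring
    rw [hc, hE, Real.exp_add]
    ring
  simp_rw [hd]
  have hinner : ∀ x : EuclideanSpace ℝ (Fin n),
      (∫ y, A.indicator 1 x * B.indicator 1 y * (gd n x * gd n y))
        = (A.indicator 1 x * gd n x) * ∫ y, B.indicator 1 y * gd n y := by
    intro x
    rw [← integral_const_mul]
    congr 1 with y
    ring
  simp_rw [hinner]
  rw [integral_mul_const]
  simp_rw [indicator_mul_gd (gd n)]
  rw [integral_indicator hA, integral_indicator hB]

/-- `ψ₁` for measurable sets. -/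
lemma psi_one_meas {A B : Set (EuclideanSpace ℝ (Fin n))}
    (hA : MeasurableSet A) (hB : MeasurableSet B) :
    psi n (A.indicator 1) (B.indicator 1) 1 = ∫ x in A ∩ B, gd n x := by
  rw [psi_one_eq]
  have : ∀ x, A.indicator 1 x * B.indicator 1 x * gd n x = (A ∩ B).indicator (gd n) x := by
    intro x
    by_cases hx : x ∈ A <;> by_cases hy : x ∈ B <;>
      simp [Set.indicator_apply, hx, hy, Set.mem_inter_iff]
  simp_rw [this]
  exact integral_indicator (hA.inter hB)

/-- `ψ` only depends on the sets up to null sets. -/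
lemma psi_congr_ae {l : ℝ} {A A' B B' : Set (EuclideanSpace ℝ (Fin n))}
    (hA : A =ᵐ[volume] A') (hB : B =ᵐ[volume] B') :
    psi n (A.indicator 1) (B.indicator 1) l = psi n (A'.indicator 1) (B'.indicator 1) l := by
  classical
  have hIA : A.indicator (1 : EuclideanSpace ℝ (Fin n) → ℝ) =ᵐ[volume] A'.indicator 1 := by
    filter_upwards [Filter.eventuallyEq_set.1 hA] with x hx
    rw [Set.indicator_apply, Set.indicator_apply, eq_iff_iff.2 hx]
  have hIB : B.indicator (1 : EuclideanSpace ℝ (Fin n) → ℝ) =ᵐ[volume] B'.indicator 1 := by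
    filter_upwards [Filter.eventuallyEq_set.1 hB] with x hx
    rw [Set.indicator_apply, Set.indicator_apply, eq_iff_iff.2 hx]
  unfold psi
  split_ifs
  · have hac : stdGaussian n ≪ volume := withDensity_absolutelyContinuous _ _
    apply integral_congr_ae
    filter_upwards [hac.ae_eq hIA, hac.ae_eq hIB] with x h1 h2
    rw [h1, h2]
  · have hinner : ∀ x, (∫ y, A.indicator 1 x * B.indicator 1 y * gaussPairDensity n l x y)
        = ∫ y, A.indicator 1 x * B'.indicator 1 y * gaussPairDensity n l x y := by
      intro x
      apply integral_congr_ae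
      filter_upwards [hIB] with y hy
      rw [hy]
    simp_rw [hinner]
    apply integral_congr_ae
    filter_upwards [hIA] with x hx
    rw [hx]

lemma stdGaussian_congr_ae {C C' : Set (EuclideanSpace ℝ (Fin n))} (h : C =ᵐ[volume] C') :
    stdGaussian n C = stdGaussian n C' := by
  have hac : stdGaussian n ≪ volume := withDensity_absolutelyContinuous _ _
  exact measure_congr (hac.ae_eq h)

end PartTwo

end GCIAux

open GCIAux in
/-- Tensorization lemma: if `ψ_{λ₁}(I_A, I_B) ≥ e^{−εn} ψ_{λ₀}(I_A, I_B)` for every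
`ε > 0`, every large enough `n` and all symmetric convex `A, B ⊆ ℝⁿ`, then
`ψ_{λ₁}(I_A, I_B) ≥ ψ_{λ₀}(I_A, I_B)` for all `n ≥ 1` and all symmetric convex `A, B`;
in particular, when `λ₀ = 0` and `λ₁ = 1` this yields the Gaussian correlation
inequality `μₙ(A ∩ B) ≥ μₙ(A) μₙ(B)`. -/
theorem psi_monotone_of_asymptotic (lam₀ lam₁ : ℝ)
    (h₀ : 0 ≤ lam₀) (h₀₁ : lam₀ < lam₁) (h₁ : lam₁ ≤ 1)
    (hyp : ∀ ε : ℝ, 0 < ε → ∃ n₀ : ℕ, ∀ n : ℕ, n₀ ≤ n →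
      ∀ A B : Set (EuclideanSpace ℝ (Fin n)),
        Convex ℝ A → (∀ x, x ∈ A ↔ -x ∈ A) →
        Convex ℝ B → (∀ x, x ∈ B ↔ -x ∈ B) →
        Real.exp (-ε * n) * psi n (A.indicator 1) (B.indicator 1) lam₀
          ≤ psi n (A.indicator 1) (B.indicator 1) lam₁) :
    (∀ n : ℕ, 1 ≤ n → ∀ A B : Set (EuclideanSpace ℝ (Fin n)),
      Convex ℝ A → (∀ x, x ∈ A ↔ -x ∈ A) →
      Convex ℝ B → (∀ x, x ∈ B ↔ -x ∈ B) →
      psi n (A.indicator 1) (B.indicator 1) lam₀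
        ≤ psi n (A.indicator 1) (B.indicator 1) lam₁) ∧
    (lam₀ = 0 → lam₁ = 1 →
      ∀ n : ℕ, 1 ≤ n → ∀ A B : Set (EuclideanSpace ℝ (Fin n)),
        Convex ℝ A → (∀ x, x ∈ A ↔ -x ∈ A) →
        Convex ℝ B → (∀ x, x ∈ B ↔ -x ∈ B) →
        stdGaussian n A * stdGaussian n B ≤ stdGaussian n (A ∩ B)) := by
  have hl₀0 : 0 ≤ lam₀ := h₀
  have hl₀1 : lam₀ < 1 := lt_of_lt_of_le h₀₁ h₁
  have hl₁0 : 0 ≤ lam₁ := le_of_lt (lt_of_le_of_lt h₀ h₀₁)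
  -- tensorization valid for both parameters
  have tensor : ∀ (l : ℝ), 0 ≤ l → l ≤ 1 → ∀ (n m : ℕ)
      (A B : Set (EuclideanSpace ℝ (Fin n))),
      psi (m * n) ((prodSet m A).indicator 1) ((prodSet m B).indicator 1) l
        = psi n (A.indicator 1) (B.indicator 1) l ^ m := by
    intro l hl0 hl1 n m A B
    rcases eq_or_lt_of_le hl1 with h1 | h1
    · rw [h1]; exact psi_one_pow A B m
    · exact psi_lt_pow A B m hl0 h1
  -- main monotonicity statement
  have main : ∀ n : ℕ, 1 ≤ n → ∀ A B : Set (EuclideanSpace ℝ (Fin n)),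
      Convex ℝ A → (∀ x, x ∈ A ↔ -x ∈ A) →
      Convex ℝ B → (∀ x, x ∈ B ↔ -x ∈ B) →
      psi n (A.indicator 1) (B.indicator 1) lam₀
        ≤ psi n (A.indicator 1) (B.indicator 1) lam₁ := by
    intro n hn A B hAc hAs hBc hBs
    set P0 := psi n (A.indicator 1) (B.indicator 1) lam₀ with hP0
    set P1 := psi n (A.indicator 1) (B.indicator 1) lam₁ with hP1
    have hP0n : 0 ≤ P0 := psi_nonneg A B hl₀0 (le_of_lt hl₀1)
    have hP1n : 0 ≤ P1 := psi_nonneg A B hl₁0 h₁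
    -- for every ε > 0, exp(-ε n) P0 ≤ P1
    have key : ∀ ε : ℝ, 0 < ε → Real.exp (-ε * n) * P0 ≤ P1 := by
      intro ε hε
      obtain ⟨n₀, hn₀⟩ := hyp ε hε
      set m := max n₀ 1 with hm
      have hm1 : 1 ≤ m := le_max_right _ _
      have hmn : n₀ ≤ m * n := le_trans (le_max_left _ _)
        (Nat.le_mul_of_pos_right _ (lt_of_lt_of_le Nat.zero_lt_one hn))
      have happ := hn₀ (m * n) hmn (prodSet m A) (prodSet m B)
        (prodSet_convex hAc) (prodSet_symm hAs) (prodSet_convex hBc) (prodSet_symm hBs)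
      rw [tensor lam₀ hl₀0 (le_of_lt hl₀1) n m A B,
        tensor lam₁ hl₁0 h₁ n m A B] at happ
      have hexp : Real.exp (-ε * ((m * n : ℕ) : ℝ)) = Real.exp (-ε * n) ^ m := by
        rw [← Real.exp_nat_mul]
        congr 1
        push_cast
        ring
      rw [hexp] at happ
      have hpow : (Real.exp (-ε * n) * P0) ^ m ≤ P1 ^ m := by
        rw [mul_pow]
        exact happ
      refine le_of_pow_le_pow_left₀ (by omega) hP1n hpow
    -- take the limit ε → 0
    by_contra hlt
    push_neg at hlt
    have hP0pos : 0 < P0 := lt_of_le_of_lt hP1n hlt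
    rcases le_or_gt P1 0 with hP1le | hP1pos
    · have := key 1 one_pos
      nlinarith [Real.exp_pos (-(1:ℝ) * n)]
    · set ε := Real.log (P0 / P1) / (2 * n) with hε
      have hrat : 1 < P0 / P1 := (one_lt_div hP1pos).2 hlt
      have hlog : 0 < Real.log (P0 / P1) := Real.log_pos hrat
      have hnpos : (0:ℝ) < n := by exact_mod_cast hn
      have hεpos : 0 < ε := by positivity
      have := key ε hεpos
      have hcalc : Real.exp (-ε * n) = (P1 / P0) ^ ((1:ℝ)/2) := by
        rw [hε]
        rw [show -(Real.log (P0 / P1) / (2 * (n:ℝ))) * n = Real.log (P1 / P0) * (1/2) by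
          rw [show Real.log (P1 / P0) = - Real.log (P0 / P1) by rw [← Real.log_inv, inv_div]]
          field_simp]
        rw [Real.exp_mul, Real.exp_log (by positivity)]
      have hgt : P1 / P0 < (P1 / P0) ^ ((1:ℝ)/2) := by
        have h01 : P1 / P0 < 1 := (div_lt_one hP0pos).2 hlt
        have hpos : 0 < P1 / P0 := by positivity
        calc P1 / P0 = (P1 / P0) ^ (1:ℝ) := (Real.rpow_one _).symm
        _ < (P1 / P0) ^ ((1:ℝ)/2) :=
          Real.rpow_lt_rpow_of_exponent_gt hpos h01 (by norm_num)
      have : P1 / P0 * P0 < P1 := by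
        calc P1 / P0 * P0 < (P1 / P0) ^ ((1:ℝ)/2) * P0 := by
              exact mul_lt_mul_of_pos_right hgt hP0pos
        _ = Real.exp (-ε * n) * P0 := by rw [hcalc]
        _ ≤ P1 := this
      rw [div_mul_cancel₀ _ (ne_of_gt hP0pos)] at this
      exact lt_irrefl _ this
  refine ⟨main, ?_⟩
  -- the Gaussian correlation consequence
  intro hz ho n hn A B hAc hAs hBc hBs
  obtain ⟨A', hA'sub, hA'meas, hA'ae⟩ :=
    (hAc.nullMeasurableSet (μ := volume)).exists_measurable_subset_ae_eq
  obtain ⟨B', hB'sub, hB'meas, hB'ae⟩ :=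
    (hBc.nullMeasurableSet (μ := volume)).exists_measurable_subset_ae_eq
  have hmono := main n hn A B hAc hAs hBc hBs
  have h0 : psi n (A.indicator 1) (B.indicator 1) lam₀
      = (∫ x in A', gd n x) * (∫ x in B', gd n x) := by
    rw [psi_congr_ae hA'ae.symm hB'ae.symm, hz, psi_zero_meas hA'meas hB'meas]
  have h1 : psi n (A.indicator 1) (B.indicator 1) lam₁ = ∫ x in A' ∩ B', gd n x := by
    rw [psi_congr_ae hA'ae.symm hB'ae.symm, ho, psi_one_meas hA'meas hB'meas]
  rw [h0, h1] at hmono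
  have hGA : stdGaussian n A = ENNReal.ofReal (∫ x in A', gd n x) := by
    rw [stdGaussian_congr_ae hA'ae.symm, stdGaussian_apply n hA'meas]
  have hGB : stdGaussian n B = ENNReal.ofReal (∫ x in B', gd n x) := by
    rw [stdGaussian_congr_ae hB'ae.symm, stdGaussian_apply n hB'meas]
  have hGAB : stdGaussian n (A ∩ B) = ENNReal.ofReal (∫ x in A' ∩ B', gd n x) := by
    rw [stdGaussian_congr_ae (hA'ae.symm.inter hB'ae.symm),
      stdGaussian_apply n (hA'meas.inter hB'meas)]
  rw [hGA, hGB, hGAB,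
    ← ENNReal.ofReal_mul (setIntegral_nonneg hA'meas fun x _ => gd_nonneg n x)]
  exact ENNReal.ofReal_le_ofReal hmono
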